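/- arXiv:2508.19853 — 2 statements merged into one kernel-verified Lean document; each statement's English description precedes it below -/
import Mathlib

section
/- Let C be a k×q real matrix, b ∈ ℝᵏ. If for every h ∈ ℝᵏ with h ≥ 0 and Cᵀh = 0 one has hᵀb ≥ 0, then there exists δ ∈ ℝ^q with Cδ ≥ −b componentwise. -/
open Matrix Finset

section Cara
variable {E : Type*} [AddCommGroup E] [Module ℝ E] {ι : Type*} [Fintype ι]
lemma conic_cara_aux (v : ι → E) : ∀ n : ℕ, ∀ c : ι → ℝ, (∀ j, 0 ≤ c j) →
    (Finset.univ.filter (fun j => c j ≠ 0)).card ≤ n →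
    ∃ c' : ι → ℝ, (∀ j, 0 ≤ c' j) ∧ (∑ j, c' j • v j = ∑ j, c j • v j) ∧
      LinearIndependent ℝ (fun j : {j // c' j ≠ 0} => v j) := by
  intro n
  induction n with
  | zero =>
    intro c hc hcard
    refine ⟨c, hc, rfl, ?_⟩
    have he : IsEmpty {j // c j ≠ 0} := by
      constructor
      rintro ⟨j, hj⟩
      have : j ∈ Finset.univ.filter (fun j => c j ≠ 0) := by simp [hj]
      have := Finset.card_pos.mpr ⟨j, this⟩
      omega
    exact linearIndependent_empty_type
  | succ n ih =>
    intro c hc hcard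
    classical
    by_cases hli : LinearIndependent ℝ (fun j : {j // c j ≠ 0} => v j)
    · exact ⟨c, hc, rfl, hli⟩
    obtain ⟨g, hg0, i₀, hi₀⟩ := Fintype.not_linearIndependent_iff.mp hli
    -- make sure g has a positive entry at i₀
    set g₁ : {j // c j ≠ 0} → ℝ := if 0 < g i₀ then g else -g with hg₁def
    have hg₁0 : ∑ i, g₁ i • v i = 0 := by
      rw [hg₁def]
      split
      · exact hg0
      · simp only [Pi.neg_apply, neg_smul, Finset.sum_neg_distrib, hg0, neg_zero]
    have hg₁pos : 0 < g₁ i₀ := by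
      rw [hg₁def]
      rcases lt_or_gt_of_ne hi₀ with h | h
      · rw [if_neg (by linarith)]; simpa using h
      · rw [if_pos h]; exact h
    set w : ι → ℝ := fun j => if h : c j ≠ 0 then g₁ ⟨j, h⟩ else 0 with hwdef
    have hw0 : ∑ j, w j • v j = 0 := by
      have h1 : ∑ j, w j • v j = ∑ j ∈ Finset.univ.filter (fun j => c j ≠ 0), w j • v j := by
        rw [Finset.sum_filter]
        refine Finset.sum_congr rfl fun j _ => ?_
        by_cases h : c j ≠ 0 <;> simp [hwdef, h]
      rw [h1, Finset.sum_subtype (Finset.univ.filter (fun j => c j ≠ 0))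
        (p := fun j => c j ≠ 0) (fun x => by simp)]
      rw [← hg₁0]
      exact Finset.sum_congr rfl fun j _ => by simp [hwdef, j.2]
    have hwi₀ : 0 < w i₀.1 := by
      have : w i₀.1 = g₁ i₀ := by simp [hwdef, i₀.2]
      rw [this]; exact hg₁pos
    have hwc : ∀ j, c j = 0 → w j = 0 := fun j hj => by simp [hwdef, hj]
    set T : Finset ι := Finset.univ.filter (fun j => 0 < w j) with hTdef
    have hT : T.Nonempty := ⟨i₀.1, by simp [hTdef, hwi₀]⟩
    obtain ⟨j₀, hj₀T, hj₀eq⟩ := Finset.exists_mem_eq_inf' hT (fun j => c j / w j)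
    set r : ℝ := T.inf' hT (fun j => c j / w j) with hrdef
    have hwj₀ : 0 < w j₀ := by simpa [hTdef] using hj₀T
    have hr0 : 0 ≤ r := hj₀eq ▸ div_nonneg (hc j₀) hwj₀.le
    set c₂ : ι → ℝ := fun j => c j - r * w j with hc₂def
    have hc₂ : ∀ j, 0 ≤ c₂ j := by
      intro j
      by_cases h : 0 < w j
      · have hjT : j ∈ T := by simp [hTdef, h]
        have : r ≤ c j / w j := Finset.inf'_le _ hjT
        have := (le_div_iff₀ h).mp this
        simp only [hc₂def]; linarith
      · have : r * w j ≤ 0 := mul_nonpos_of_nonneg_of_nonpos hr0 (not_lt.mp h)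
        have := hc j
        simp only [hc₂def]; linarith
    have hc₂sum : ∑ j, c₂ j • v j = ∑ j, c j • v j := by
      simp only [hc₂def, sub_smul, Finset.sum_sub_distrib, mul_smul, ← Finset.smul_sum, hw0,
        smul_zero, sub_zero]
    have hc₂j₀ : c₂ j₀ = 0 := by
      have hrw : r * w j₀ = c j₀ := by
        rw [hj₀eq]; exact div_mul_cancel₀ _ (ne_of_gt hwj₀)
      simp only [hc₂def, hrw, sub_self]
    have hsubset : Finset.univ.filter (fun j => c₂ j ≠ 0) ⊆
        (Finset.univ.filter (fun j => c j ≠ 0)).erase j₀ := by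
      intro j hj
      simp only [Finset.mem_filter, Finset.mem_univ, true_and] at hj
      rw [Finset.mem_erase]
      constructor
      · rintro rfl; exact hj hc₂j₀
      · simp only [Finset.mem_filter, Finset.mem_univ, true_and]
        intro h
        exact hj (by simp [hc₂def, h, hwc j h])
    have hj₀mem : j₀ ∈ Finset.univ.filter (fun j => c j ≠ 0) := by
      simp only [Finset.mem_filter, Finset.mem_univ, true_and]
      intro h
      exact absurd (hwc j₀ h) (ne_of_gt hwj₀)
    have hcard₂ : (Finset.univ.filter (fun j => c₂ j ≠ 0)).card ≤ n := by
      have := Finset.card_le_card hsubset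
      rw [Finset.card_erase_of_mem hj₀mem] at this
      omega
    obtain ⟨c', h1, h2, h3⟩ := ih c₂ hc₂ hcard₂
    exact ⟨c', h1, h2.trans hc₂sum, h3⟩


end Cara

section Closed
variable {E : Type*} [NormedAddCommGroup E] [NormedSpace ℝ E] {ι : Type*} [Fintype ι]

/-- The linear map sending coefficients to the combination. -/
noncomputable def combMap (v : ι → E) : (ι → ℝ) →ₗ[ℝ] E where
  toFun c := ∑ j, c j • v j
  map_add' c d := by simp [add_smul, Finset.sum_add_distrib]
  map_smul' r c := by simp [mul_smul, Finset.smul_sum]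

lemma cone_isClosed (v : ι → E) :
    IsClosed {x : E | ∃ c : ι → ℝ, (∀ j, 0 ≤ c j) ∧ x = ∑ j, c j • v j} := by
  classical
  set σ := {s : Finset ι // LinearIndependent ℝ (fun j : s => v j)} with hσ
  have hset : {x : E | ∃ c : ι → ℝ, (∀ j, 0 ≤ c j) ∧ x = ∑ j, c j • v j} =
      ⋃ t : σ, (combMap (fun j : t.1 => v j)) '' {c : t.1 → ℝ | ∀ j, 0 ≤ c j} := by
    ext x
    simp only [Set.mem_setOf_eq, Set.mem_iUnion, Set.mem_image]
    constructor
    · rintro ⟨c, hc, rfl⟩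
      obtain ⟨c', hc'0, hc'sum, hc'li⟩ := conic_cara_aux v
        (Finset.univ.filter (fun j => c j ≠ 0)).card c hc le_rfl
      set s : Finset ι := Finset.univ.filter (fun j => c' j ≠ 0) with hs
      have hmem : ∀ j : ι, j ∈ s ↔ c' j ≠ 0 := fun j => by simp [hs]
      have hli : LinearIndependent ℝ (fun j : s => v j) := by
        let e : {j // j ∈ s} → {j // c' j ≠ 0} := fun j => ⟨j.1, (hmem j.1).mp j.2⟩
        have einj : Function.Injective e := by
          intro a b hab
          have h2 : (e a).1 = (e b).1 := by rw [hab]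
          exact Subtype.ext h2
        exact hc'li.comp e einj
      refine ⟨⟨s, hli⟩, fun j : s => c' j, fun j => hc'0 j, ?_⟩
      show ∑ j : s, c' (j : ι) • v (j : ι) = _
      rw [Finset.sum_coe_sort s (fun j => c' j • v j), ← hc'sum]
      exact (Finset.sum_subset (f := fun j => c' j • v j) (Finset.subset_univ s)
        (fun j _ hj => by
          have hz : c' j = 0 := by_contra fun h => hj ((hmem j).mpr h)
          simp only [hz, zero_smul]))
    · rintro ⟨t, c, hc, rfl⟩
      refine ⟨fun j => if h : j ∈ t.1 then c ⟨j, h⟩ else 0,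
        fun j => by
          show 0 ≤ if h : j ∈ t.1 then c ⟨j, h⟩ else 0
          by_cases h : j ∈ t.1
          · rw [dif_pos h]; exact hc ⟨j, h⟩
          · rw [dif_neg h], ?_⟩
      show _ = ∑ j : ι, (if h : j ∈ t.1 then c ⟨j, h⟩ else 0) • v j
      rw [← Finset.sum_subset (f := fun j => (if h : j ∈ t.1 then c ⟨j, h⟩ else 0) • v j)
        (Finset.subset_univ t.1) (fun j _ hj => by simp only [dif_neg hj, zero_smul])]
      rw [← Finset.sum_coe_sort t.1
        (fun j => (if h : j ∈ t.1 then c ⟨j, h⟩ else 0) • v j)]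
      exact Finset.sum_congr rfl fun j _ => by simp [j.2]
  rw [hset]
  refine isClosed_iUnion_of_finite fun t => ?_
  have hker : LinearMap.ker (combMap (fun j : t.1 => v j)) = ⊥ := by
    rw [LinearMap.ker_eq_bot']
    intro g hg
    have := Fintype.linearIndependent_iff.mp t.2 g hg
    funext j; exact this j
  have hemb := LinearMap.isClosedEmbedding_of_injective hker
  refine hemb.isClosedMap _ ?_
  rw [Set.setOf_forall]
  exact isClosed_iInter fun j => isClosed_le continuous_const (continuous_apply j)

end Closed

open scoped InnerProductSpace in
theorem elimination_farkas_direction {k q : ℕ}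
    (C : Matrix (Fin k) (Fin q) ℝ) (b : Fin k → ℝ)
    (hfarkas : ∀ h : Fin k → ℝ, (∀ i, 0 ≤ h i) → Cᵀ *ᵥ h = 0 → 0 ≤ h ⬝ᵥ b) :
    ∃ δ : Fin q → ℝ, ∀ i, -b i ≤ (C *ᵥ δ) i := by
  classical
  set E := EuclideanSpace ℝ (Fin k) with hE
  let ψ : E ≃ₗ[ℝ] (Fin k → ℝ) := WithLp.linearEquiv 2 ℝ (Fin k → ℝ)
  let ι := Fin k ⊕ Fin q ⊕ Fin q
  let v₀ : ι → (Fin k → ℝ) := fun j =>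
    Sum.elim (fun i => Pi.single i 1)
      (Sum.elim (fun j i => C i j) (fun j i => -(C i j))) j
  let v : ι → E := fun j => ψ.symm (v₀ j)
  have hclosed := cone_isClosed v
  let K : ConvexCone ℝ E :=
  { carrier := {x : E | ∃ c : ι → ℝ, (∀ j, 0 ≤ c j) ∧ x = ∑ j, c j • v j}
    smul_mem' := by
      rintro r hr x ⟨c, hc, rfl⟩
      exact ⟨fun j => r * c j, fun j => mul_nonneg hr.le (hc j), by
        simp [Finset.smul_sum, mul_smul]⟩
    add_mem' := by
      rintro x ⟨c, hc, rfl⟩ y ⟨d, hd, rfl⟩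
      exact ⟨fun j => c j + d j, fun j => add_nonneg (hc j) (hd j), by
        simp [add_smul, Finset.sum_add_distrib]⟩ }
  have hzero : (0 : E) ∈ K := ⟨fun _ => 0, fun _ => le_rfl, by simp⟩
  have hgen : ∀ j₀ : ι, v j₀ ∈ K := by
    intro j₀
    refine ⟨Pi.single j₀ 1, fun j => ?_, ?_⟩
    · by_cases h : j = j₀ <;> simp [Pi.single_apply, h]
    · simp [Pi.single_apply, ite_smul, zero_smul]
      rw [Finset.sum_eq_single j₀ (fun b _ hb => if_neg hb) (fun h => absurd (Finset.mem_univ j₀) h), if_pos rfl]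
  have hinner : ∀ (x₀ : Fin k → ℝ) (y : E), ⟪ψ.symm x₀, y⟫_ℝ = ∑ i, x₀ i * (ψ y) i := by
    intro x₀ y
    rw [PiLp.inner_apply]
    exact Finset.sum_congr rfl fun i _ => by rw [mul_comm]; rfl
  have hb : ψ.symm b ∈ K := by
    by_contra hbS
    obtain ⟨y, hy1, hy2⟩ : ∃ y : E, (∀ x ∈ K, 0 ≤ ⟪x, y⟫_ℝ) ∧ ⟪y, ψ.symm b⟫_ℝ < 0 := by
      let P : ProperCone ℝ E := { toSubmodule := K.toPointedCone hzero, isClosed' := hclosed }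
      obtain ⟨y, h1, h2⟩ := ProperCone.hyperplane_separation' P (x₀ := ψ.symm b) hbS
      exact ⟨y, fun x hx => h1 x hx, by rwa [real_inner_comm]⟩
    set y₀ : Fin k → ℝ := ψ y with hy₀
    have hy_nonneg : ∀ i, 0 ≤ y₀ i := by
      intro i
      have := hy1 _ (hgen (Sum.inl i))
      rw [hinner] at this
      simpa [v₀, Pi.single_apply, ite_mul, Finset.sum_ite_eq] using this
    have hCty : Cᵀ *ᵥ y₀ = 0 := by
      funext j
      have h1 := hy1 _ (hgen (Sum.inr (Sum.inl j)))
      have h2 := hy1 _ (hgen (Sum.inr (Sum.inr j)))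
      rw [hinner] at h1 h2
      simp only [Sum.elim_inr, Sum.elim_inl, v₀, neg_mul, Finset.sum_neg_distrib] at h1 h2
      have hz : ∑ i, C i j * y₀ i = 0 := le_antisymm (by linarith) h1
      simp only [Matrix.mulVec, dotProduct, Matrix.transpose_apply, Pi.zero_apply]
      exact hz
    have hpos := hfarkas y₀ hy_nonneg hCty
    have hy2' : ∑ i, y₀ i * b i < 0 := by
      rw [real_inner_comm, hinner] at hy2
      calc ∑ i, y₀ i * b i = ∑ i, b i * y₀ i := by
            exact Finset.sum_congr rfl fun i _ => mul_comm _ _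
        _ < 0 := hy2
    rw [dotProduct] at hpos
    linarith
  obtain ⟨c, hc, hrep⟩ := hb
  have hb' : b = ∑ j : ι, c j • v₀ j := by
    have := congrArg ψ hrep
    rwa [ψ.apply_symm_apply, map_sum] at this
  have key : ∀ i, b i = c (Sum.inl i)
      + ∑ j, c (Sum.inr (Sum.inl j)) * C i j
      - ∑ j, c (Sum.inr (Sum.inr j)) * C i j := by
    intro i
    have h := congrFun hb' i
    rw [Finset.sum_apply] at h
    rw [Fintype.sum_sum_type] at h
    simp only [Pi.smul_apply, smul_eq_mul, Sum.elim_inl, Sum.elim_inr, v₀] at h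
    rw [Fintype.sum_sum_type] at h
    simp only [Sum.elim_inl, Sum.elim_inr, Pi.single_apply, mul_ite, mul_one, mul_zero,
      Finset.sum_ite_eq, Finset.mem_univ, if_true, mul_neg, Finset.sum_neg_distrib] at h
    rw [h]; ring
  refine ⟨fun j => c (Sum.inr (Sum.inr j)) - c (Sum.inr (Sum.inl j)), fun i => ?_⟩
  have hmv : (C *ᵥ fun j => c (Sum.inr (Sum.inr j)) - c (Sum.inr (Sum.inl j))) i
      = ∑ j, c (Sum.inr (Sum.inr j)) * C i j - ∑ j, c (Sum.inr (Sum.inl j)) * C i j := by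
    simp only [Matrix.mulVec, dotProduct, mul_sub, Finset.sum_sub_distrib]
    congr 1 <;> exact Finset.sum_congr rfl fun j _ => mul_comm _ _
  rw [hmv]
  have := hc (Sum.inl i)
  have hk := key i
  linarith
end

section
/- Let X ~ N(θ, 1) with θ ≤ 0, and let T = max(X, 0)². For α ∈ (0, 1/2) and any z ≥ 0, set β = 2αΦ(z) and let c_β = (Φ^{-1}(1 − β/2))² be the 1 − β quantile of χ²₁. Then P(T > c_β) = P(X > Φ^{-1}(1 − β/2)) ≤ β/2 = αΦ(z) ≤ α. -/
open MeasureTheory ProbabilityTheory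

/-- The standard normal CDF. -/
noncomputable def stdNormalCDF : ℝ → ℝ := fun x => cdf (gaussianReal 0 1) x

/-- The standard normal quantile function. -/
noncomputable def normalQuantile (p : ℝ) : ℝ :=
  sInf {x : ℝ | p ≤ stdNormalCDF x}

namespace RCCAux

open Set Filter Topology

instance gaussianNoAtoms (m : ℝ) : NullSingletonClass (gaussianReal m 1) :=
  ⟨fun x => (gaussianReal_absolutelyContinuous m one_ne_zero) (measure_singleton x)⟩

lemma continuous_cdf_gaussian (m : ℝ) : Continuous (cdf (gaussianReal m 1)) := by
  rw [continuous_iff_continuousAt]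
  intro x
  rw [(monotone_cdf (gaussianReal m 1)).continuousAt_iff_leftLim_eq_rightLim,
    StieltjesFunction.rightLim_eq]
  have h1 : (cdf (gaussianReal m 1)).measure {x} = 0 := by
    rw [measure_cdf]; exact measure_singleton x
  rw [StieltjesFunction.measure_singleton] at h1
  have h2 := (monotone_cdf (gaussianReal m 1)).leftLim_le (le_refl x)
  have h3 := ENNReal.ofReal_eq_zero.mp h1
  linarith

lemma continuous_stdNormalCDF : Continuous stdNormalCDF :=
  continuous_cdf_gaussian 0

lemma monotone_stdNormalCDF : Monotone stdNormalCDF :=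
  monotone_cdf (gaussianReal 0 1)

lemma stdNormalCDF_pos (z : ℝ) : 0 < stdNormalCDF z := by
  have hne : gaussianReal 0 1 (Iic z) ≠ 0 := by
    intro h
    have := gaussianReal_absolutelyContinuous' 0 one_ne_zero h
    rw [Real.volume_Iic] at this
    exact ENNReal.top_ne_zero this
  have : stdNormalCDF z = (gaussianReal 0 1 (Iic z)).toReal := cdf_eq_real _ z
  rw [this]
  exact ENNReal.toReal_pos hne (measure_ne_top _ _)

lemma stdNormalCDF_le_one (z : ℝ) : stdNormalCDF z ≤ 1 := cdf_le_one _ z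

lemma quantile_set_nonempty {p : ℝ} (hp1 : p < 1) :
    {x : ℝ | p ≤ stdNormalCDF x}.Nonempty := by
  obtain ⟨x, hx⟩ := ((tendsto_cdf_atTop (gaussianReal 0 1)).eventually
    (eventually_gt_nhds hp1)).exists
  exact ⟨x, hx.le⟩

lemma quantile_set_bddBelow {p : ℝ} (hp0 : 0 < p) :
    BddBelow {x : ℝ | p ≤ stdNormalCDF x} := by
  obtain ⟨y, hy⟩ := eventually_atBot.1 ((tendsto_cdf_atBot (gaussianReal 0 1)).eventually
    (eventually_lt_nhds hp0))
  refine ⟨y, fun x hx => ?_⟩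
  by_contra h
  exact absurd hx (not_le.2 (hy x (le_of_not_ge h)))

lemma stdNormalCDF_normalQuantile {p : ℝ} (hp0 : 0 < p) (hp1 : p < 1) :
    stdNormalCDF (normalQuantile p) = p := by
  have hne := quantile_set_nonempty hp1
  have hbdd := quantile_set_bddBelow hp0
  have hclosed : IsClosed {x : ℝ | p ≤ stdNormalCDF x} :=
    isClosed_le continuous_const continuous_stdNormalCDF
  have hmem : normalQuantile p ∈ {x : ℝ | p ≤ stdNormalCDF x} :=
    hclosed.csInf_mem hne hbdd
  refine le_antisymm ?_ hmem
  by_contra h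
  push_neg at h
  have hev : ∀ᶠ x in 𝓝 (normalQuantile p), p < stdNormalCDF x :=
    (continuous_stdNormalCDF.tendsto _).eventually (eventually_gt_nhds h)
  have hev' : ∀ᶠ x in 𝓝[<] (normalQuantile p),
      p < stdNormalCDF x ∧ x < normalQuantile p :=
    (hev.filter_mono nhdsWithin_le_nhds).and (eventually_mem_nhdsWithin.mono fun x hx => hx)
  obtain ⟨x, hx1, hx2⟩ := hev'.exists
  exact absurd (csInf_le hbdd hx1.le) (not_le.2 hx2)

lemma stdNormalCDF_zero : stdNormalCDF 0 = 1 / 2 := by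
  have hmap : Measure.map (fun x : ℝ => -x) (gaussianReal 0 1) = gaussianReal 0 1 := by
    have h := gaussianReal_map_const_mul (μ := 0) (v := 1) (-1)
    have h1 : ((-1 : ℝ) * 0 : ℝ) = 0 := by norm_num
    have h2 : (NNReal.mk ((-1 : ℝ) ^ 2) (sq_nonneg _)) * 1 = 1 := by
      ext; norm_num
    rw [h1, h2] at h
    rw [← h]
    congr 1
    ext x
    ring
  have hIic : gaussianReal 0 1 (Iic 0) = gaussianReal 0 1 (Ici 0) := by
    conv_lhs => rw [← hmap]
    rw [Measure.map_apply measurable_neg measurableSet_Iic]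
    congr 1
    ext x
    simp
  have hIci : gaussianReal 0 1 (Ici 0) = gaussianReal 0 1 (Ioi 0) :=
    (measure_congr (Ioi_ae_eq_Ici' (measure_singleton (0 : ℝ)))).symm
  have hcompl : gaussianReal 0 1 (Ioi 0) = 1 - gaussianReal 0 1 (Iic 0) := by
    rw [← Set.compl_Iic]
    exact prob_compl_eq_one_sub measurableSet_Iic
  have key : gaussianReal 0 1 (Iic 0) = 1 - gaussianReal 0 1 (Iic 0) := by
    conv_lhs => rw [hIic, hIci, hcompl]
  have hle : gaussianReal 0 1 (Iic 0) ≤ 1 := prob_le_one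
  have hΦ : stdNormalCDF 0 = (gaussianReal 0 1 (Iic 0)).toReal := cdf_eq_real _ 0
  have htr : (gaussianReal 0 1 (Iic 0)).toReal = 1 - (gaussianReal 0 1 (Iic 0)).toReal := by
    conv_lhs => rw [key]
    rw [ENNReal.toReal_sub_of_le hle (by simp)]
    simp
  rw [hΦ]
  linarith

lemma normalQuantile_nonneg {p : ℝ} (hp : 1 / 2 < p) (hp1 : p < 1) :
    0 ≤ normalQuantile p := by
  refine le_csInf (quantile_set_nonempty hp1) fun x hx => ?_
  by_contra h
  push_neg at h
  have : stdNormalCDF x ≤ stdNormalCDF 0 := monotone_stdNormalCDF h.le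
  rw [stdNormalCDF_zero] at this
  exact absurd hx (not_le.2 (lt_of_le_of_lt this hp))

end RCCAux

open RCCAux Set

theorem rcc_one_active_size_calculation {Ω : Type*} [MeasureSpace Ω]
    (P : Measure Ω) [IsProbabilityMeasure P]
    (θ : ℝ) (hθ : θ ≤ 0)
    (X : Ω → ℝ) (hX : Measurable X)
    (hXlaw : Measure.map X P = gaussianReal θ 1)
    (T : Ω → ℝ) (hT : T = fun ω => max (X ω) 0 ^ 2)
    (α : ℝ) (hα : α ∈ Set.Ioo (0 : ℝ) (1 / 2)) (z : ℝ) (hz : 0 ≤ z)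
    (β : ℝ) (hβ : β = 2 * α * stdNormalCDF z)
    (c : ℝ) (hc : c = (normalQuantile (1 - β / 2)) ^ 2) :
    (P {ω | T ω > c}).toReal = (P {ω | X ω > normalQuantile (1 - β / 2)}).toReal ∧
      (P {ω | X ω > normalQuantile (1 - β / 2)}).toReal ≤ β / 2 ∧
      β / 2 = α * stdNormalCDF z ∧
      α * stdNormalCDF z ≤ α := by
  obtain ⟨hα0, hα2⟩ := hα
  have hΦz_pos : 0 < stdNormalCDF z := stdNormalCDF_pos z
  have hΦz_le : stdNormalCDF z ≤ 1 := stdNormalCDF_le_one z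
  have hβ0 : 0 < β := by rw [hβ]; positivity
  have hβ2 : β / 2 < 1 / 2 := by rw [hβ]; nlinarith
  set p : ℝ := 1 - β / 2 with hp
  have hp0 : 0 < p := by simp only [hp]; linarith
  have hp1 : p < 1 := by simp only [hp]; linarith
  have hphalf : 1 / 2 < p := by simp only [hp]; linarith
  set q : ℝ := normalQuantile p with hqdef
  have hΦq : stdNormalCDF q = p := stdNormalCDF_normalQuantile hp0 hp1
  have hq0 : 0 ≤ q := normalQuantile_nonneg hphalf hp1
  -- set equality
  have hsets : {ω | T ω > c} = {ω | X ω > q} := by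
    ext ω
    simp only [hT, hc, mem_setOf_eq, gt_iff_lt]
    rw [pow_lt_pow_iff_left₀ hq0 (le_max_right _ _) two_ne_zero]
    constructor
    · intro h
      rcases lt_max_iff.1 h with h' | h'
      · exact h'
      · exact absurd h' (not_lt.2 hq0)
    · intro h
      exact lt_max_iff.2 (Or.inl h)
  -- probability computation
  have hPX : P {ω | X ω > q} = gaussianReal θ 1 (Ioi q) := by
    rw [← hXlaw, Measure.map_apply hX measurableSet_Ioi]
    rfl
  have hmapθ : Measure.map (· + θ) (gaussianReal 0 1) = gaussianReal θ 1 := by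
    have := gaussianReal_map_add_const (μ := 0) (v := 1) θ
    rwa [zero_add] at this
  have hshift : gaussianReal θ 1 (Ioi q) = gaussianReal 0 1 (Ioi (q - θ)) := by
    rw [← hmapθ, Measure.map_apply (measurable_id'.add_const θ) measurableSet_Ioi]
    congr 1
    ext x
    simp [sub_lt_iff_lt_add]
  have hmono : gaussianReal 0 1 (Ioi (q - θ)) ≤ gaussianReal 0 1 (Ioi q) :=
    measure_mono (Ioi_subset_Ioi (by linarith))
  have hIoi : (gaussianReal 0 1 (Ioi q)).toReal = 1 - stdNormalCDF q := by
    have : gaussianReal 0 1 (Ioi q) = 1 - gaussianReal 0 1 (Iic q) := by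
      rw [← Set.compl_Iic]
      exact prob_compl_eq_one_sub measurableSet_Iic
    rw [this, ENNReal.toReal_sub_of_le prob_le_one (by simp)]
    have := cdf_eq_real (gaussianReal 0 1) q
    simp only [ENNReal.toReal_one]
    rw [show stdNormalCDF q = (gaussianReal 0 1 (Iic q)).toReal from this]
  have hbound : (P {ω | X ω > q}).toReal ≤ β / 2 := by
    rw [hPX, hshift]
    have := ENNReal.toReal_mono (measure_ne_top _ _) hmono
    rw [hIoi, hΦq] at this
    simp only [hp] at this
    linarith
  refine ⟨by rw [hsets], hbound, by rw [hβ]; ring, ?_⟩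
  nlinarith
end
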